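/- A latin square S has a transversal trade of volume 3 if and only if its latin square graph Γ(S) contains an induced subgraph isomorphic to K_{3,3}. -/
import Mathlib


/-- A latin square of order `n` as a function: each row and each column is injective. -/
def IsLatin {n : ℕ} (L : Fin n → Fin n → Fin n) : Prop :=
  (∀ r, Function.Injective (L r)) ∧ (∀ c, Function.Injective (fun r => L r c))

/-- A transversal trade: nonempty disjoint sets of cells meeting every row, column
and letter clique in equally many elements. -/
def IsTransversalTrade {n : ℕ} (L : Fin n → Fin n → Fin n)
    (Tp Tm : Finset (Fin n × Fin n)) : Prop :=
  Tp.Nonempty ∧ Tm.Nonempty ∧ Disjoint Tp Tm ∧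
    (∀ r : Fin n, (Tp.filter (fun p => p.1 = r)).card = (Tm.filter (fun p => p.1 = r)).card) ∧
    (∀ c : Fin n, (Tp.filter (fun p => p.2 = c)).card = (Tm.filter (fun p => p.2 = c)).card) ∧
    (∀ l : Fin n, (Tp.filter (fun p => L p.1 p.2 = l)).card =
      (Tm.filter (fun p => L p.1 p.2 = l)).card)

/-- The latin square graph on cells: distinct cells adjacent iff same row, column or letter. -/
def LSGraph {n : ℕ} (L : Fin n → Fin n → Fin n) : SimpleGraph (Fin n × Fin n) :=
  SimpleGraph.fromRel (fun u v => u.1 = v.1 ∨ u.2 = v.2 ∨ L u.1 u.2 = L v.1 v.2)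

namespace Stmt4Aux

/-- The six-cell configuration corresponding to both sides. -/
def Six {n : ℕ} (L : Fin n → Fin n → Fin n) : Prop :=
  ∃ p q : Fin 3 → Fin n × Fin n,
    (∀ i j : Fin 3, i ≠ j → (p i).1 ≠ (p j).1 ∧ (p i).2 ≠ (p j).2 ∧
        L (p i).1 (p i).2 ≠ L (p j).1 (p j).2) ∧
    (∀ i j : Fin 3, i ≠ j → (q i).1 ≠ (q j).1 ∧ (q i).2 ≠ (q j).2 ∧
        L (q i).1 (q i).2 ≠ L (q j).1 (q j).2) ∧
    (∀ i j : Fin 3, p i ≠ q j) ∧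
    (∀ i j : Fin 3, (p i).1 = (q j).1 ∨ (p i).2 = (q j).2 ∨
        L (p i).1 (p i).2 = L (q j).1 (q j).2)

variable {α β : Type*} [DecidableEq α] [DecidableEq β]

lemma exists_of_count {T U : Finset α} {P : α → Prop} [DecidablePred P]
    (h : (T.filter P).card = (U.filter P).card) {a : α} (ha : a ∈ T) (hPa : P a) :
    ∃ b ∈ U, P b := by
  have h0 : 0 < (U.filter P).card := by
    rw [← h]
    exact Finset.card_pos.2 ⟨a, Finset.mem_filter.2 ⟨ha, hPa⟩⟩
  obtain ⟨b, hb⟩ := Finset.card_pos.1 h0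
  exact ⟨b, (Finset.mem_filter.1 hb).1, (Finset.mem_filter.1 hb).2⟩

lemma exists_two_of_count {T U : Finset α} {P : α → Prop} [DecidablePred P]
    (h : (T.filter P).card = (U.filter P).card) {a a' : α} (ha : a ∈ T) (ha' : a' ∈ T)
    (hne : a ≠ a') (hPa : P a) (hPa' : P a') :
    ∃ b b', b ∈ U ∧ b' ∈ U ∧ b ≠ b' ∧ P b ∧ P b' := by
  have h1 : 1 < (U.filter P).card := by
    rw [← h]
    exact Finset.one_lt_card.2 ⟨a, Finset.mem_filter.2 ⟨ha, hPa⟩, a',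
      Finset.mem_filter.2 ⟨ha', hPa'⟩, hne⟩
  obtain ⟨b, hb, b', hb', hbb⟩ := Finset.one_lt_card.1 h1
  exact ⟨b, b', (Finset.mem_filter.1 hb).1, (Finset.mem_filter.1 hb').1, hbb,
    (Finset.mem_filter.1 hb).2, (Finset.mem_filter.1 hb').2⟩

lemma four_not_in_three {T : Finset α} (hT : T.card = 3) {a b x y : α}
    (ha : a ∈ T) (hb : b ∈ T) (hx : x ∈ T) (hy : y ∈ T)
    (h1 : a ≠ b) (h2 : x ≠ a) (h3 : x ≠ b) (h4 : y ≠ a) (h5 : y ≠ b) (h6 : x ≠ y) :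
    False := by
  have hsub : ({a, b, x, y} : Finset α) ⊆ T := by
    intro z hz
    simp only [Finset.mem_insert, Finset.mem_singleton] at hz
    rcases hz with rfl | rfl | rfl | rfl <;> assumption
  have hcard : ({a, b, x, y} : Finset α).card = 4 := by
    rw [Finset.card_insert_of_notMem (by simp [h1, Ne.symm h2, Ne.symm h4]),
      Finset.card_insert_of_notMem (by simp [Ne.symm h3, Ne.symm h5]),
      Finset.card_insert_of_notMem (by simp [h6]), Finset.card_singleton]
  have := Finset.card_le_card hsub
  omega

/-- Abstract version of the "all values of an attribute are distinct" argument. -/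
lemma attr_ne {T U : Finset α} (hT : T.card = 3) (hdisj : Disjoint T U)
    (f g : α → β) (hfg : ∀ u v, f u = f v → g u = g v → u = v)
    (hcf : ∀ r, (T.filter (fun x => f x = r)).card = (U.filter (fun x => f x = r)).card)
    (hcg : ∀ c, (T.filter (fun x => g x = c)).card = (U.filter (fun x => g x = c)).card) :
    ∀ a ∈ T, ∀ b ∈ T, a ≠ b → f a ≠ f b := by
  intro a ha b hb hab hf
  obtain ⟨q, q', hq, hq', hqq, hfq, hfq'⟩ :=
    exists_two_of_count (hcf (f a)) ha hb hab rfl hf.symm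
  have hgqq : g q ≠ g q' := fun hg => hqq (hfg _ _ (hfq.trans hfq'.symm) hg)
  obtain ⟨x, hxT, hgx⟩ := exists_of_count (hcg (g q)).symm hq rfl
  obtain ⟨x', hx'T, hgx'⟩ := exists_of_count (hcg (g q')).symm hq' rfl
  have hfx : f x ≠ f a := by
    intro hfx
    have : x = q := hfg _ _ (hfx.trans hfq.symm) hgx
    exact (Finset.disjoint_left.1 hdisj hxT) (this ▸ hq)
  have hfx' : f x' ≠ f a := by
    intro hfx'
    have : x' = q' := hfg _ _ (hfx'.trans hfq'.symm) hgx'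
    exact (Finset.disjoint_left.1 hdisj hx'T) (this ▸ hq')
  exact four_not_in_three hT ha hb hxT hx'T hab
    (fun h => hfx (congrArg f h)) (fun h => hfx (hf ▸ congrArg f h))
    (fun h => hfx' (congrArg f h)) (fun h => hfx' (hf ▸ congrArg f h))
    (fun h => hgqq (hgx ▸ hgx' ▸ congrArg g h))

lemma card_triple {x y z : β} (h1 : x ≠ y) (h2 : x ≠ z) (h3 : y ≠ z) :
    ({x, y, z} : Finset β).card = 3 := by
  rw [Finset.card_insert_of_notMem (by simp [h1, h2]),
    Finset.card_insert_of_notMem (by simp [h3]), Finset.card_singleton]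

lemma filter_card_three {a b c : α} (f : α → β)
    (hab : f a ≠ f b) (hac : f a ≠ f c) (hbc : f b ≠ f c) (r : β) :
    (({a, b, c} : Finset α).filter (fun x => f x = r)).card =
      if r = f a ∨ r = f b ∨ r = f c then 1 else 0 := by
  have h1 : a ≠ b := fun h => hab (congrArg f h)
  have h2 : a ≠ c := fun h => hac (congrArg f h)
  have h3 : b ≠ c := fun h => hbc (congrArg f h)
  by_cases e1 : r = f a <;> by_cases e2 : r = f b <;> by_cases e3 : r = f c <;>
    simp only [Finset.filter_insert, Finset.filter_singleton]
  · exact absurd (e1.symm.trans e2) hab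
  · exact absurd (e1.symm.trans e2) hab
  · exact absurd (e1.symm.trans e3) hac
  · rw [if_pos e1.symm, if_neg (fun h => e2 h.symm), if_neg (fun h => e3 h.symm),
      if_pos (Or.inl e1)]
    simp
  · exact absurd (e2.symm.trans e3) hbc
  · rw [if_neg (fun h => e1 h.symm), if_pos e2.symm, if_neg (fun h => e3 h.symm),
      if_pos (Or.inr (Or.inl e2))]
    simp
  · rw [if_neg (fun h => e1 h.symm), if_neg (fun h => e2 h.symm), if_pos e3.symm,
      if_pos (Or.inr (Or.inr e3))]
    simp
  · rw [if_neg (fun h => e1 h.symm), if_neg (fun h => e2 h.symm),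
      if_neg (fun h => e3 h.symm), if_neg (by tauto)]
    simp

variable {n : ℕ} {L : Fin n → Fin n → Fin n}

lemma trade_six (hL : IsLatin L) {Tp Tm : Finset (Fin n × Fin n)}
    (ht : IsTransversalTrade L Tp Tm) (hc : Tp.card = 3) : Six L := by
  obtain ⟨hne, hme, hdisj, hr, hcc, hl⟩ := ht
  have hTm : Tm.card = 3 := by
    have h1 := Finset.card_eq_sum_card_fiberwise
      (f := Prod.fst) (t := Finset.univ) (s := Tp) (fun x _ => Finset.mem_univ _)
    have h2 := Finset.card_eq_sum_card_fiberwise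
      (f := Prod.fst) (t := Finset.univ) (s := Tm) (fun x _ => Finset.mem_univ _)
    rw [h2, ← Finset.sum_congr rfl (fun r _ => hr r), ← h1, hc]
  -- pairwise distinct attributes inside Tp
  have rowsP : ∀ a ∈ Tp, ∀ b ∈ Tp, a ≠ b → a.1 ≠ b.1 :=
    attr_ne hc hdisj Prod.fst Prod.snd (fun u v h1 h2 => Prod.ext h1 h2) hr hcc
  have colsP : ∀ a ∈ Tp, ∀ b ∈ Tp, a ≠ b → a.2 ≠ b.2 :=
    attr_ne hc hdisj Prod.snd Prod.fst (fun u v h1 h2 => Prod.ext h2 h1) hcc hr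
  have letP : ∀ a ∈ Tp, ∀ b ∈ Tp, a ≠ b → L a.1 a.2 ≠ L b.1 b.2 :=
    attr_ne hc hdisj (fun x => L x.1 x.2) Prod.fst
      (fun u v h1 h2 => Prod.ext h2 (hL.1 v.1 (by
        have h1' : L u.1 u.2 = L v.1 v.2 := h1
        rw [h2] at h1'; exact h1'))) hl hr
  have rowsM : ∀ a ∈ Tm, ∀ b ∈ Tm, a ≠ b → a.1 ≠ b.1 :=
    attr_ne hTm hdisj.symm Prod.fst Prod.snd (fun u v h1 h2 => Prod.ext h1 h2)
      (fun r => (hr r).symm) (fun c => (hcc c).symm)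
  have colsM : ∀ a ∈ Tm, ∀ b ∈ Tm, a ≠ b → a.2 ≠ b.2 :=
    attr_ne hTm hdisj.symm Prod.snd Prod.fst (fun u v h1 h2 => Prod.ext h2 h1)
      (fun c => (hcc c).symm) (fun r => (hr r).symm)
  have letM : ∀ a ∈ Tm, ∀ b ∈ Tm, a ≠ b → L a.1 a.2 ≠ L b.1 b.2 :=
    attr_ne hTm hdisj.symm (fun x => L x.1 x.2) Prod.fst
      (fun u v h1 h2 => Prod.ext h2 (hL.1 v.1 (by
        have h1' : L u.1 u.2 = L v.1 v.2 := h1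
        rw [h2] at h1'; exact h1')))
      (fun l => (hl l).symm) (fun r => (hr r).symm)
  -- complete bipartiteness
  have hshare : ∀ a ∈ Tp, ∀ b ∈ Tm,
      a.1 = b.1 ∨ a.2 = b.2 ∨ L a.1 a.2 = L b.1 b.2 := by
    intro a ha b hb
    by_contra hcon
    push_neg at hcon
    obtain ⟨hr1, hc1, hl1⟩ := hcon
    obtain ⟨q1, hq1, hq1p⟩ := exists_of_count (hr a.1) ha rfl
    obtain ⟨q2, hq2, hq2p⟩ := exists_of_count (hcc a.2) ha rfl
    obtain ⟨q3, hq3, hq3p⟩ := exists_of_count (hl (L a.1 a.2)) ha rfl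
    have hb1 : q1 ≠ b := fun h => hr1 (by rw [← hq1p, h])
    have hb2 : q2 ≠ b := fun h => hc1 (by rw [← hq2p, h])
    have hb3 : q3 ≠ b := fun h => hl1 (by rw [← hq3p, h])
    have h12 : q1 ≠ q2 := by
      intro h
      have : q1 = a := Prod.ext hq1p (h ▸ hq2p)
      exact Finset.disjoint_left.1 hdisj ha (this ▸ hq1)
    have h13 : q1 ≠ q3 := by
      intro h
      have hc2 : q1.2 = a.2 := hL.1 a.1 (by
        have h' : L q1.1 q1.2 = L a.1 a.2 := by rw [h]; exact hq3p
        rw [hq1p] at h'; exact h')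
      have : q1 = a := Prod.ext hq1p hc2
      exact Finset.disjoint_left.1 hdisj ha (this ▸ hq1)
    have h23 : q2 ≠ q3 := by
      intro h
      have hr2 : q2.1 = a.1 := hL.2 a.2 (by
        have h' : L q2.1 q2.2 = L a.1 a.2 := by rw [h]; exact hq3p
        rw [hq2p] at h'; exact h')
      have : q2 = a := Prod.ext hr2 hq2p
      exact Finset.disjoint_left.1 hdisj ha (this ▸ hq2)
    exact four_not_in_three hTm hq1 hb hq2 hq3 hb1 h12.symm hb2 h13.symm hb3 h23
  obtain ⟨p0, p1, p2, hp01, hp02, hp12, hTpeq⟩ := Finset.card_eq_three.1 hc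
  obtain ⟨q0, q1, q2, hq01, hq02, hq12, hTmeq⟩ := Finset.card_eq_three.1 hTm
  have hmemp : ∀ i, (![p0, p1, p2] : Fin 3 → _) i ∈ Tp := by
    intro i; fin_cases i <;> simp [hTpeq]
  have hmemq : ∀ i, (![q0, q1, q2] : Fin 3 → _) i ∈ Tm := by
    intro i; fin_cases i <;> simp [hTmeq]
  have hnep : ∀ i j : Fin 3, i ≠ j → (![p0, p1, p2] : Fin 3 → _) i ≠ ![p0, p1, p2] j := by
    intro i j hij
    fin_cases i <;> fin_cases j <;>
      first
        | exact absurd rfl hij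
        | exact hp01 | exact hp02 | exact hp12
        | exact hp01.symm | exact hp02.symm | exact hp12.symm
  have hneq : ∀ i j : Fin 3, i ≠ j → (![q0, q1, q2] : Fin 3 → _) i ≠ ![q0, q1, q2] j := by
    intro i j hij
    fin_cases i <;> fin_cases j <;>
      first
        | exact absurd rfl hij
        | exact hq01 | exact hq02 | exact hq12
        | exact hq01.symm | exact hq02.symm | exact hq12.symm
  refine ⟨![p0, p1, p2], ![q0, q1, q2], ?_, ?_, ?_, ?_⟩
  · intro i j hij
    exact ⟨rowsP _ (hmemp i) _ (hmemp j) (hnep i j hij),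
      colsP _ (hmemp i) _ (hmemp j) (hnep i j hij),
      letP _ (hmemp i) _ (hmemp j) (hnep i j hij)⟩
  · intro i j hij
    exact ⟨rowsM _ (hmemq i) _ (hmemq j) (hneq i j hij),
      colsM _ (hmemq i) _ (hmemq j) (hneq i j hij),
      letM _ (hmemq i) _ (hmemq j) (hneq i j hij)⟩
  · intro i j h
    exact Finset.disjoint_left.1 hdisj (hmemp i) (by rw [h]; exact hmemq j)
  · intro i j
    exact hshare _ (hmemp i) _ (hmemq j)

lemma six_trade (h : Six L) :
    ∃ Tp Tm : Finset (Fin n × Fin n), IsTransversalTrade L Tp Tm ∧ Tp.card = 3 := by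
  obtain ⟨p, q, hp, hq, hpq, hsh⟩ := h
  have d01 : (0 : Fin 3) ≠ 1 := by decide
  have d02 : (0 : Fin 3) ≠ 2 := by decide
  have d12 : (1 : Fin 3) ≠ 2 := by decide
  -- pigeonhole: the row of each q j is a row of some p i
  have hrow_mem : ∀ j, (q j).1 = (p 0).1 ∨ (q j).1 = (p 1).1 ∨ (q j).1 = (p 2).1 := by
    intro j
    by_contra hcon
    push_neg at hcon
    obtain ⟨h0, h1, h2⟩ := hcon
    have t0 := (hsh 0 j).resolve_left (fun h => h0 h.symm)
    have t1 := (hsh 1 j).resolve_left (fun h => h1 h.symm)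
    have t2 := (hsh 2 j).resolve_left (fun h => h2 h.symm)
    rcases t0 with c0 | l0 <;> rcases t1 with c1 | l1 <;> rcases t2 with c2 | l2
    · exact (hp 0 1 d01).2.1 (c0.trans c1.symm)
    · exact (hp 0 1 d01).2.1 (c0.trans c1.symm)
    · exact (hp 0 2 d02).2.1 (c0.trans c2.symm)
    · exact (hp 1 2 d12).2.2 (l1.trans l2.symm)
    · exact (hp 1 2 d12).2.1 (c1.trans c2.symm)
    · exact (hp 0 2 d02).2.2 (l0.trans l2.symm)
    · exact (hp 0 1 d01).2.2 (l0.trans l1.symm)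
    · exact (hp 0 1 d01).2.2 (l0.trans l1.symm)
  have hcol_mem : ∀ j, (q j).2 = (p 0).2 ∨ (q j).2 = (p 1).2 ∨ (q j).2 = (p 2).2 := by
    intro j
    by_contra hcon
    push_neg at hcon
    obtain ⟨h0, h1, h2⟩ := hcon
    have t0 : (p 0).1 = (q j).1 ∨ L (p 0).1 (p 0).2 = L (q j).1 (q j).2 := by
      rcases hsh 0 j with h | h | h
      exacts [Or.inl h, absurd h.symm h0, Or.inr h]
    have t1 : (p 1).1 = (q j).1 ∨ L (p 1).1 (p 1).2 = L (q j).1 (q j).2 := by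
      rcases hsh 1 j with h | h | h
      exacts [Or.inl h, absurd h.symm h1, Or.inr h]
    have t2 : (p 2).1 = (q j).1 ∨ L (p 2).1 (p 2).2 = L (q j).1 (q j).2 := by
      rcases hsh 2 j with h | h | h
      exacts [Or.inl h, absurd h.symm h2, Or.inr h]
    rcases t0 with c0 | l0 <;> rcases t1 with c1 | l1 <;> rcases t2 with c2 | l2
    · exact (hp 0 1 d01).1 (c0.trans c1.symm)
    · exact (hp 0 1 d01).1 (c0.trans c1.symm)
    · exact (hp 0 2 d02).1 (c0.trans c2.symm)
    · exact (hp 1 2 d12).2.2 (l1.trans l2.symm)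
    · exact (hp 1 2 d12).1 (c1.trans c2.symm)
    · exact (hp 0 2 d02).2.2 (l0.trans l2.symm)
    · exact (hp 0 1 d01).2.2 (l0.trans l1.symm)
    · exact (hp 0 1 d01).2.2 (l0.trans l1.symm)
  have hlet_mem : ∀ j, L (q j).1 (q j).2 = L (p 0).1 (p 0).2 ∨
      L (q j).1 (q j).2 = L (p 1).1 (p 1).2 ∨ L (q j).1 (q j).2 = L (p 2).1 (p 2).2 := by
    intro j
    by_contra hcon
    push_neg at hcon
    obtain ⟨h0, h1, h2⟩ := hcon
    have t0 : (p 0).1 = (q j).1 ∨ (p 0).2 = (q j).2 := by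
      rcases hsh 0 j with h | h | h
      exacts [Or.inl h, Or.inr h, absurd h.symm h0]
    have t1 : (p 1).1 = (q j).1 ∨ (p 1).2 = (q j).2 := by
      rcases hsh 1 j with h | h | h
      exacts [Or.inl h, Or.inr h, absurd h.symm h1]
    have t2 : (p 2).1 = (q j).1 ∨ (p 2).2 = (q j).2 := by
      rcases hsh 2 j with h | h | h
      exacts [Or.inl h, Or.inr h, absurd h.symm h2]
    rcases t0 with c0 | l0 <;> rcases t1 with c1 | l1 <;> rcases t2 with c2 | l2
    · exact (hp 0 1 d01).1 (c0.trans c1.symm)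
    · exact (hp 0 1 d01).1 (c0.trans c1.symm)
    · exact (hp 0 2 d02).1 (c0.trans c2.symm)
    · exact (hp 1 2 d12).2.1 (l1.trans l2.symm)
    · exact (hp 1 2 d12).1 (c1.trans c2.symm)
    · exact (hp 0 2 d02).2.1 (l0.trans l2.symm)
    · exact (hp 0 1 d01).2.1 (l0.trans l1.symm)
    · exact (hp 0 1 d01).2.1 (l0.trans l1.symm)
  have hrow_eq : ({(q 0).1, (q 1).1, (q 2).1} : Finset (Fin n)) =
      {(p 0).1, (p 1).1, (p 2).1} := by
    apply Finset.eq_of_subset_of_card_le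
    · intro z hz
      simp only [Finset.mem_insert, Finset.mem_singleton] at hz ⊢
      rcases hz with rfl | rfl | rfl
      exacts [hrow_mem 0, hrow_mem 1, hrow_mem 2]
    · rw [card_triple (hp 0 1 d01).1 (hp 0 2 d02).1 (hp 1 2 d12).1,
        card_triple (hq 0 1 d01).1 (hq 0 2 d02).1 (hq 1 2 d12).1]
  have hcol_eq : ({(q 0).2, (q 1).2, (q 2).2} : Finset (Fin n)) =
      {(p 0).2, (p 1).2, (p 2).2} := by
    apply Finset.eq_of_subset_of_card_le
    · intro z hz
      simp only [Finset.mem_insert, Finset.mem_singleton] at hz ⊢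
      rcases hz with rfl | rfl | rfl
      exacts [hcol_mem 0, hcol_mem 1, hcol_mem 2]
    · rw [card_triple (hp 0 1 d01).2.1 (hp 0 2 d02).2.1 (hp 1 2 d12).2.1,
        card_triple (hq 0 1 d01).2.1 (hq 0 2 d02).2.1 (hq 1 2 d12).2.1]
  have hlet_eq : ({L (q 0).1 (q 0).2, L (q 1).1 (q 1).2, L (q 2).1 (q 2).2} : Finset (Fin n)) =
      {L (p 0).1 (p 0).2, L (p 1).1 (p 1).2, L (p 2).1 (p 2).2} := by
    apply Finset.eq_of_subset_of_card_le
    · intro z hz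
      simp only [Finset.mem_insert, Finset.mem_singleton] at hz ⊢
      rcases hz with rfl | rfl | rfl
      exacts [hlet_mem 0, hlet_mem 1, hlet_mem 2]
    · rw [card_triple (hp 0 1 d01).2.2 (hp 0 2 d02).2.2 (hp 1 2 d12).2.2,
        card_triple (hq 0 1 d01).2.2 (hq 0 2 d02).2.2 (hq 1 2 d12).2.2]
  refine ⟨{p 0, p 1, p 2}, {q 0, q 1, q 2}, ⟨⟨_, Finset.mem_insert_self _ _⟩,
    ⟨_, Finset.mem_insert_self _ _⟩, ?_, ?_, ?_, ?_⟩, ?_⟩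
  · rw [Finset.disjoint_left]
    intro x hx hx'
    simp only [Finset.mem_insert, Finset.mem_singleton] at hx hx'
    rcases hx with rfl | rfl | rfl <;> rcases hx' with h | h | h <;> exact hpq _ _ h
  · intro r
    rw [filter_card_three Prod.fst (hp 0 1 d01).1 (hp 0 2 d02).1 (hp 1 2 d12).1 r,
      filter_card_three Prod.fst (hq 0 1 d01).1 (hq 0 2 d02).1 (hq 1 2 d12).1 r]
    refine if_congr ?_ rfl rfl
    have h' := Finset.ext_iff.1 hrow_eq r
    simp only [Finset.mem_insert, Finset.mem_singleton] at h'
    exact h'.symm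
  · intro c
    rw [filter_card_three Prod.snd (hp 0 1 d01).2.1 (hp 0 2 d02).2.1 (hp 1 2 d12).2.1 c,
      filter_card_three Prod.snd (hq 0 1 d01).2.1 (hq 0 2 d02).2.1 (hq 1 2 d12).2.1 c]
    refine if_congr ?_ rfl rfl
    have h' := Finset.ext_iff.1 hcol_eq c
    simp only [Finset.mem_insert, Finset.mem_singleton] at h'
    exact h'.symm
  · intro l
    rw [filter_card_three (fun x : Fin n × Fin n => L x.1 x.2)
        (hp 0 1 d01).2.2 (hp 0 2 d02).2.2 (hp 1 2 d12).2.2 l,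
      filter_card_three (fun x : Fin n × Fin n => L x.1 x.2)
        (hq 0 1 d01).2.2 (hq 0 2 d02).2.2 (hq 1 2 d12).2.2 l]
    refine if_congr ?_ rfl rfl
    have h' := Finset.ext_iff.1 hlet_eq l
    simp only [Finset.mem_insert, Finset.mem_singleton] at h'
    exact h'.symm
  · exact card_triple (fun h => (hp 0 1 d01).1 (congrArg Prod.fst h))
      (fun h => (hp 0 2 d02).1 (congrArg Prod.fst h))
      (fun h => (hp 1 2 d12).1 (congrArg Prod.fst h))

lemma six_iso (h : Six L) : ∃ s : Set (Fin n × Fin n),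
    Nonempty ((LSGraph L).induce s ≃g completeBipartiteGraph (Fin 3) (Fin 3)) := by
  obtain ⟨p, q, hp, hq, hpq, hsh⟩ := h
  set v : Fin 3 ⊕ Fin 3 → Fin n × Fin n := Sum.elim p q with hv
  have hinj : Function.Injective v := by
    rintro (i | i) (j | j) h <;> simp only [hv, Sum.elim_inl, Sum.elim_inr] at h
    · have : i = j := by
        by_contra hij
        exact (hp i j hij).1 (congrArg Prod.fst h)
      exact congrArg Sum.inl this
    · exact absurd h (hpq i j)
    · exact absurd h.symm (hpq j i)
    · have : i = j := by
        by_contra hij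
        exact (hq i j hij).1 (congrArg Prod.fst h)
      exact congrArg Sum.inr this
  refine ⟨Set.range v, ⟨SimpleGraph.Iso.symm ⟨Equiv.ofInjective v hinj, ?_⟩⟩⟩
  intro a b
  have hcoe : ∀ x, ((Equiv.ofInjective v hinj) x : Fin n × Fin n) = v x := fun _ => rfl
  show ((LSGraph L).induce (Set.range v)).Adj _ _ ↔ _
  rw [SimpleGraph.comap_adj]
  simp only [Function.Embedding.coe_subtype, hcoe]
  rcases a with i | i <;> rcases b with j | j <;>
    simp only [hv, Sum.elim_inl, Sum.elim_inr, LSGraph, SimpleGraph.fromRel_adj]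
  · refine iff_of_false (fun hadj' => ?_) (by simp)
    obtain ⟨hne, hrel⟩ := hadj'
    have hij : i ≠ j := fun e => hne (congrArg p e)
    rcases hrel with (h | h | h) | (h | h | h)
    exacts [(hp i j hij).1 h, (hp i j hij).2.1 h, (hp i j hij).2.2 h,
      (hp j i hij.symm).1 h, (hp j i hij.symm).2.1 h, (hp j i hij.symm).2.2 h]
  · exact iff_of_true ⟨hpq i j, Or.inl (hsh i j)⟩ (by simp)
  · exact iff_of_true ⟨fun h => hpq j i h.symm, Or.inr (hsh j i)⟩ (by simp)
  · refine iff_of_false (fun hadj' => ?_) (by simp)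
    obtain ⟨hne, hrel⟩ := hadj'
    have hij : i ≠ j := fun e => hne (congrArg q e)
    rcases hrel with (h | h | h) | (h | h | h)
    exacts [(hq i j hij).1 h, (hq i j hij).2.1 h, (hq i j hij).2.2 h,
      (hq j i hij.symm).1 h, (hq j i hij.symm).2.1 h, (hq j i hij.symm).2.2 h]

lemma iso_six {s : Set (Fin n × Fin n)}
    (e : (LSGraph L).induce s ≃g completeBipartiteGraph (Fin 3) (Fin 3)) : Six L := by
  set f := e.symm with hf
  set p : Fin 3 → Fin n × Fin n := fun i => (f (Sum.inl i) : Fin n × Fin n) with hpd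
  set q : Fin 3 → Fin n × Fin n := fun j => (f (Sum.inr j) : Fin n × Fin n) with hqd
  have hinj : ∀ x y, ((f x : Fin n × Fin n)) = (f y : Fin n × Fin n) → x = y :=
    fun x y h => f.injective (Subtype.ext h)
  have hA : ∀ x y, (LSGraph L).Adj (f x : Fin n × Fin n) (f y : Fin n × Fin n) ↔
      (completeBipartiteGraph (Fin 3) (Fin 3)).Adj x y := by
    intro x y
    have := f.map_adj_iff (v := x) (w := y)
    rwa [SimpleGraph.comap_adj] at this
  have hadj : ∀ i j, (LSGraph L).Adj (p i) (q j) := by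
    intro i j
    rw [hpd, hqd]
    exact (hA (Sum.inl i) (Sum.inr j)).2 (by simp)
  have hnadjp : ∀ i j : Fin 3, i ≠ j → ¬ (LSGraph L).Adj (p i) (p j) := by
    intro i j hij hadj'
    exact (by simp : ¬ (completeBipartiteGraph (Fin 3) (Fin 3)).Adj (Sum.inl i) (Sum.inl j))
      ((hA (Sum.inl i) (Sum.inl j)).1 hadj')
  have hnadjq : ∀ i j : Fin 3, i ≠ j → ¬ (LSGraph L).Adj (q i) (q j) := by
    intro i j hij hadj'
    exact (by simp : ¬ (completeBipartiteGraph (Fin 3) (Fin 3)).Adj (Sum.inr i) (Sum.inr j))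
      ((hA (Sum.inr i) (Sum.inr j)).1 hadj')
  have hnep : ∀ i j : Fin 3, i ≠ j → p i ≠ p j :=
    fun i j hij h => hij (Sum.inl.inj (hinj _ _ h))
  have hneq : ∀ i j : Fin 3, i ≠ j → q i ≠ q j :=
    fun i j hij h => hij (Sum.inr.inj (hinj _ _ h))
  refine ⟨p, q, ?_, ?_, ?_, ?_⟩
  · intro i j hij
    have h1 := hnadjp i j hij
    rw [LSGraph, SimpleGraph.fromRel_adj] at h1
    have hnr : ¬(((p i).1 = (p j).1 ∨ (p i).2 = (p j).2 ∨
        L (p i).1 (p i).2 = L (p j).1 (p j).2) ∨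
        ((p j).1 = (p i).1 ∨ (p j).2 = (p i).2 ∨
        L (p j).1 (p j).2 = L (p i).1 (p i).2)) :=
      fun hr => h1 ⟨hnep i j hij, hr⟩
    push_neg at hnr
    exact ⟨hnr.1.1, hnr.1.2.1, hnr.1.2.2⟩
  · intro i j hij
    have h1 := hnadjq i j hij
    rw [LSGraph, SimpleGraph.fromRel_adj] at h1
    have hnr : ¬(((q i).1 = (q j).1 ∨ (q i).2 = (q j).2 ∨
        L (q i).1 (q i).2 = L (q j).1 (q j).2) ∨
        ((q j).1 = (q i).1 ∨ (q j).2 = (q i).2 ∨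
        L (q j).1 (q j).2 = L (q i).1 (q i).2)) :=
      fun hr => h1 ⟨hneq i j hij, hr⟩
    push_neg at hnr
    exact ⟨hnr.1.1, hnr.1.2.1, hnr.1.2.2⟩
  · intro i j h
    exact Sum.inl_ne_inr (hinj (Sum.inl i) (Sum.inr j) h)
  · intro i j
    have h1 := hadj i j
    rw [LSGraph, SimpleGraph.fromRel_adj] at h1
    rcases h1.2 with (h | h | h) | (h | h | h)
    exacts [Or.inl h, Or.inr (Or.inl h), Or.inr (Or.inr h),
      Or.inl h.symm, Or.inr (Or.inl h.symm), Or.inr (Or.inr h.symm)]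

end Stmt4Aux

theorem stmt4 {n : ℕ} (L : Fin n → Fin n → Fin n) (hL : IsLatin L) :
    (∃ Tp Tm : Finset (Fin n × Fin n), IsTransversalTrade L Tp Tm ∧ Tp.card = 3) ↔
    (∃ s : Set (Fin n × Fin n),
      Nonempty ((LSGraph L).induce s ≃g completeBipartiteGraph (Fin 3) (Fin 3))) := by
  constructor
  · rintro ⟨Tp, Tm, ht, hc⟩
    exact Stmt4Aux.six_iso (Stmt4Aux.trade_six hL ht hc)
  · rintro ⟨s, ⟨e⟩⟩
    exact Stmt4Aux.six_trade (Stmt4Aux.iso_six e)
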